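/- Let γ > 0, x₃(0) > 0 and σ(x(0)) ≠ 0, and let x : [0, t₀) → ℝ³ be a maximal continuously differentiable solution of the closed-loop Brockett system ẋ₁ = −γg₁(x)/|g(x)|, ẋ₂ = −γg₂(x)/|g(x)|, ẋ₃ = x₁ẋ₂ − x₂ẋ₁ with σ(x(t)) ≠ 0 and x₃(t) ≠ 0 for all t ∈ [0, t₀), where t₀ ≤ ∞. Then x₃(t) → 0 as t → t₀ if and only if σ(x(t)) → 0 as t → t₀; consequently, if t₀ < ∞ then x(t) → 0 as t → t₀. -/

import Mathlib

/-- `σ x = √(x₁² + x₂²)`. -/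
noncomputable def sigmaBI (x : EuclideanSpace ℝ (Fin 3)) : ℝ :=
  Real.sqrt (x 0 ^ 2 + x 1 ^ 2)

/-- The goal function `Q(x) = (σ(x) − |x₃|)² + x₃²` for the Brockett integrator. -/
noncomputable def QBI (x : EuclideanSpace ℝ (Fin 3)) : ℝ :=
  (sigmaBI x - |x 2|) ^ 2 + (x 2) ^ 2

/-- First component of the speed-gradient vector `g(x)` for the Brockett integrator:
`g₁(x) = 2x₁ − 4x₂x₃ − 2|x₃|x₁/σ(x) + 2 sgn(x₃) x₂ σ(x)`. -/
noncomputable def g1BI (x : EuclideanSpace ℝ (Fin 3)) : ℝ :=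
  2 * x 0 - 4 * x 1 * x 2 - 2 * |x 2| * x 0 / sigmaBI x + 2 * Real.sign (x 2) * x 1 * sigmaBI x

/-- Second component of the speed-gradient vector `g(x)` for the Brockett integrator:
`g₂(x) = 2x₂ + 4x₁x₃ − 2|x₃|x₂/σ(x) − 2 sgn(x₃) x₁ σ(x)`. -/
noncomputable def g2BI (x : EuclideanSpace ℝ (Fin 3)) : ℝ :=
  2 * x 1 + 4 * x 0 * x 2 - 2 * |x 2| * x 1 / sigmaBI x - 2 * Real.sign (x 2) * x 0 * sigmaBI x

/-- The Euclidean norm `|g(x)|` of the speed-gradient vector. -/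
noncomputable def ngBI (x : EuclideanSpace ℝ (Fin 3)) : ℝ :=
  Real.sqrt (g1BI x ^ 2 + g2BI x ^ 2)

/-- The right-hand side of the closed-loop Brockett system
`ẋ₁ = −γg₁(x)/|g(x)|, ẋ₂ = −γg₂(x)/|g(x)|, ẋ₃ = x₁ẋ₂ − x₂ẋ₁`. -/
noncomputable def brockettRHS (γ : ℝ) (y : EuclideanSpace ℝ (Fin 3)) :
    EuclideanSpace ℝ (Fin 3) :=
  (WithLp.equiv 2 (Fin 3 → ℝ)).symm
    ![-γ * g1BI y / ngBI y,
      -γ * g2BI y / ngBI y,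
      y 0 * (-γ * g2BI y / ngBI y) - y 1 * (-γ * g1BI y / ngBI y)]


set_option maxHeartbeats 1000000
set_option maxRecDepth 8000

open Filter Topology Set

lemma comap_coe_nhdsWithin_Iio_coe (T : ℝ) :
    Filter.comap (fun t : ℝ => (t : EReal)) (𝓝[<] ((T:ℝ) : EReal)) = 𝓝[<] T := by
  rw [nhdsWithin, nhdsWithin, Filter.comap_inf, EReal.nhds_coe,
    Filter.comap_map EReal.coe_injective]
  congr 1
  rw [Filter.comap_principal]
  congr 1
  ext s
  simp [EReal.coe_lt_coe_iff]

lemma comap_coe_nhdsWithin_Iio_top :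
    Filter.comap (fun t : ℝ => (t : EReal)) (𝓝[<] (⊤ : EReal)) = atTop := by
  rw [nhdsWithin, EReal.nhds_top', Filter.comap_inf, Filter.comap_principal, Filter.comap_iInf]
  have h1 : ∀ a : ℝ, Filter.comap (fun t : ℝ => (t : EReal)) (𝓟 (Ioi (a:EReal))) = 𝓟 (Ioi a) := by
    intro a; rw [Filter.comap_principal]; congr 1; ext s; simp
  have h2 : (fun t : ℝ => (t : EReal)) ⁻¹' (Iio (⊤:EReal)) = univ := by
    ext s; simp [EReal.coe_lt_top]
  simp only [h1, h2, Filter.principal_univ, inf_top_eq]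
  simpa using (atTop_basis_Ioi.eq_biInf).symm

lemma rhs0 (γ : ℝ) (y : EuclideanSpace ℝ (Fin 3)) :
    brockettRHS γ y 0 = -γ * g1BI y / ngBI y := rfl
lemma rhs1 (γ : ℝ) (y : EuclideanSpace ℝ (Fin 3)) :
    brockettRHS γ y 1 = -γ * g2BI y / ngBI y := rfl
lemma rhs2 (γ : ℝ) (y : EuclideanSpace ℝ (Fin 3)) :
    brockettRHS γ y 2 =
      y 0 * (-γ * g2BI y / ngBI y) - y 1 * (-γ * g1BI y / ngBI y) := rfl

lemma sigma_pos {y : EuclideanSpace ℝ (Fin 3)} (hσ : sigmaBI y ≠ 0) : 0 < sigmaBI y :=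
  (Real.sqrt_nonneg _).lt_of_ne' hσ

lemma sigma_sq (y : EuclideanSpace ℝ (Fin 3)) : sigmaBI y ^ 2 = y 0 ^ 2 + y 1 ^ 2 :=
  Real.sq_sqrt (by positivity)

section
variable {y : EuclideanSpace ℝ (Fin 3)} (hσ : sigmaBI y ≠ 0) (hc : 0 < y 2)
include hσ hc

lemma combo1 : y 0 * g1BI y + y 1 * g2BI y
    = 2 * sigmaBI y ^ 2 - 2 * y 2 * sigmaBI y := by
  have h2 := sigma_sq y
  have h0 := sigma_pos hσ
  rw [g1BI, g2BI, Real.sign_of_pos hc, abs_of_pos hc]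
  field_simp
  linear_combination (2 * y 2 - 2 * sigmaBI y) * h2

lemma combo2 : y 0 * g2BI y - y 1 * g1BI y
    = 4 * y 2 * sigmaBI y ^ 2 - 2 * sigmaBI y ^ 3 := by
  have h2 := sigma_sq y
  have h0 := sigma_pos hσ
  rw [g1BI, g2BI, Real.sign_of_pos hc, abs_of_pos hc]
  field_simp
  linear_combination (2 * sigmaBI y ^ 2 - 4 * y 2 * sigmaBI y) * h2

lemma gsq : g1BI y ^ 2 + g2BI y ^ 2
    = 4 * ((sigmaBI y - y 2) ^ 2 + sigmaBI y ^ 2 * (sigmaBI y - 2 * y 2) ^ 2) := by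
  have h2 := sigma_sq y
  have key : sigmaBI y ^ 2 * (g1BI y ^ 2 + g2BI y ^ 2)
      = (y 0 * g1BI y + y 1 * g2BI y) ^ 2 + (y 0 * g2BI y - y 1 * g1BI y) ^ 2 := by
    linear_combination (g1BI y ^ 2 + g2BI y ^ 2) * h2
  rw [combo1 hσ hc, combo2 hσ hc] at key
  apply mul_left_cancel₀ (pow_ne_zero 2 hσ)
  rw [key]; ring

lemma ng_pos : 0 < ngBI y := by
  have h0 := sigma_pos hσ
  apply Real.sqrt_pos.2
  rw [gsq hσ hc]
  rcases eq_or_ne (sigmaBI y) (y 2) with he | he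
  · rw [he]
    nlinarith [mul_pos (mul_pos hc hc) (mul_pos hc hc)]
  · have h1 : 0 < (sigmaBI y - y 2) ^ 2 :=
      lt_of_le_of_ne (sq_nonneg _) (Ne.symm (pow_ne_zero 2 (sub_ne_zero.2 he)))
    nlinarith [sq_nonneg (sigmaBI y * (sigmaBI y - 2 * y 2))]

lemma ng_sq : ngBI y ^ 2
    = 4 * ((sigmaBI y - y 2) ^ 2 + sigmaBI y ^ 2 * (sigmaBI y - 2 * y 2) ^ 2) := by
  rw [ngBI, Real.sq_sqrt (by positivity)]
  exact gsq hσ hc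

end

section Traj
variable {γ : ℝ} {S : Set ℝ} {x : ℝ → EuclideanSpace ℝ (Fin 3)} {t : ℝ}

lemma comp_deriv (hode : HasDerivWithinAt x (brockettRHS γ (x t)) S t) (i : Fin 3) :
    HasDerivWithinAt (fun s => x s i) (brockettRHS γ (x t) i) S t :=
  (EuclideanSpace.proj i (𝕜 := ℝ)).hasFDerivAt.comp_hasDerivWithinAt t hode

lemma c_deriv (hode : HasDerivWithinAt x (brockettRHS γ (x t)) S t)
    (hσ : sigmaBI (x t) ≠ 0) (hc : 0 < x t 2) :
    HasDerivWithinAt (fun s => x s 2)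
      (2*γ*(sigmaBI (x t))^2*(sigmaBI (x t) - 2*(x t 2))/ngBI (x t)) S t := by
  have h := comp_deriv hode 2
  have h2 := combo2 hσ hc
  have hng := (ng_pos hσ hc).ne'
  have hval : brockettRHS γ (x t) 2
      = 2*γ*(sigmaBI (x t))^2*(sigmaBI (x t) - 2*(x t 2))/ngBI (x t) := by
    rw [rhs2]
    field_simp
    linear_combination (-γ) * h2
  rwa [hval] at h

lemma sigma_deriv (hode : HasDerivWithinAt x (brockettRHS γ (x t)) S t)
    (hσ : sigmaBI (x t) ≠ 0) (hc : 0 < x t 2) :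
    HasDerivWithinAt (fun s => sigmaBI (x s))
      (2*γ*(x t 2 - sigmaBI (x t))/ngBI (x t)) S t := by
  have hA := comp_deriv hode 0
  have hB := comp_deriv hode 1
  have hu : HasDerivWithinAt (fun s => (x s 0)^2 + (x s 1)^2)
      ((2*(x t 0)^1*(brockettRHS γ (x t) 0)) + (2*(x t 1)^1*(brockettRHS γ (x t) 1))) S t := by
    have := (hA.pow 2).add (hB.pow 2)
    norm_num at this ⊢
    exact this
  have harg : (x t 0)^2 + (x t 1)^2 ≠ 0 := by
    rw [← sigma_sq]; exact pow_ne_zero 2 hσ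
  have h := hu.sqrt harg
  have hval : ((2*(x t 0)^1*(brockettRHS γ (x t) 0)) + (2*(x t 1)^1*(brockettRHS γ (x t) 1)))
      / (2 * Real.sqrt ((x t 0)^2 + (x t 1)^2))
      = 2*γ*(x t 2 - sigmaBI (x t))/ngBI (x t) := by
    have h1 := combo1 hσ hc
    have hng := (ng_pos hσ hc).ne'
    have hσ' := (sigma_pos hσ).ne'
    rw [rhs0, rhs1, show Real.sqrt ((x t 0)^2 + (x t 1)^2) = sigmaBI (x t) from rfl]
    field_simp
    linear_combination (-γ) * h1
  rw [hval] at h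
  exact h

lemma rhs_norm_le (hγ : 0 < γ) (hσ : sigmaBI (x t) ≠ 0) (hc : 0 < x t 2) :
    ‖brockettRHS γ (x t)‖ ≤ γ * (1 + sigmaBI (x t)) := by
  set y := x t
  have hng := ng_pos hσ hc
  have hngsq : ngBI y ^ 2 = g1BI y ^ 2 + g2BI y ^ 2 := Real.sq_sqrt (by positivity)
  have hσp := sigma_pos hσ
  have hssq := sigma_sq y
  have hnorm : ‖brockettRHS γ y‖
      = Real.sqrt ((brockettRHS γ y 0)^2 + ((brockettRHS γ y 1)^2 + ((brockettRHS γ y 2)^2 + 0))) := by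
    rw [EuclideanSpace.norm_eq]
    congr 1
    rw [Fin.sum_univ_three]
    simp [sq_abs]
    ring
  rw [hnorm]
  have hb : (brockettRHS γ y 0)^2 + ((brockettRHS γ y 1)^2 + ((brockettRHS γ y 2)^2 + 0))
      ≤ (γ * (1 + sigmaBI y))^2 := by
    rw [rhs0, rhs1, rhs2]
    have h01 : (-γ * g1BI y / ngBI y)^2 + (-γ * g2BI y / ngBI y)^2 = γ^2 := by
      field_simp
      linear_combination hngsq.symm
    have hCS : (y 0 * (-γ * g2BI y / ngBI y) - y 1 * (-γ * g1BI y / ngBI y))^2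
        ≤ (sigmaBI y)^2 * γ^2 := by
      have : (y 0 * (-γ * g2BI y / ngBI y) - y 1 * (-γ * g1BI y / ngBI y))^2
          ≤ (y 0^2 + y 1^2) * ((-γ * g1BI y / ngBI y)^2 + (-γ * g2BI y / ngBI y)^2) := by
        nlinarith [sq_nonneg (y 0 * (-γ * g1BI y / ngBI y) + y 1 * (-γ * g2BI y / ngBI y))]
      rw [h01] at this
      rw [hssq]
      exact this
    nlinarith [hCS, h01, mul_pos hγ hσp]
  calc Real.sqrt _ ≤ Real.sqrt ((γ * (1 + sigmaBI y))^2) := Real.sqrt_le_sqrt hb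
  _ = γ * (1 + sigmaBI y) := Real.sqrt_sq (by positivity)

end Traj

/-- Fencing: no upcrossing of a level where the derivative is negative. -/
lemma no_upcross {D : Set ℝ} (hD : Convex ℝ D) {f F : ℝ → ℝ}
    (hf : ∀ t ∈ D, HasDerivWithinAt f (F t) D t) {lvl : ℝ}
    (hbd : ∀ t ∈ D, f t = lvl → F t < 0) {a : ℝ} (ha : a ∈ D) (hfa : f a ≤ lvl) :
    ∀ t ∈ D, a ≤ t → f t ≤ lvl := by
  intro t ht hat
  have hsub : Icc a t ⊆ D := hD.ordConnected.out ha ht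
  refine image_le_of_deriv_right_lt_deriv_boundary (f' := F) (B := fun _ => lvl)
    (B' := fun _ => 0) (fun s hs => (hf s (hsub hs)).continuousWithinAt.mono hsub)
    (fun s hs => ?_) hfa (fun s => hasDerivAt_const s lvl)
    (fun s hs hfs => hbd s (hsub (Ico_subset_Icc_self hs)) hfs) (right_mem_Icc.2 hat)
  have hsD : s ∈ D := hsub (Ico_subset_Icc_self hs)
  have h1 : HasDerivWithinAt f (F s) (Ico s t) s :=
    (hf s hsD).mono fun u hu => hsub ⟨le_trans hs.1 hu.1, hu.2.le⟩
  rw [← Ici_inter_Iio] at h1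
  exact (hasDerivWithinAt_inter (Iio_mem_nhds hs.2)).mp h1

/-- Monotonicity from a nonnegative derivative within a convex set. -/
lemma mono_from_deriv {D : Set ℝ} (hD : Convex ℝ D) {f F : ℝ → ℝ}
    (hf : ∀ t ∈ D, HasDerivWithinAt f (F t) D t) (h0 : ∀ t ∈ D, 0 ≤ F t) :
    MonotoneOn f D :=
  monotoneOn_of_hasDerivWithinAt_nonneg hD
    (fun t ht => (hf t ht).continuousWithinAt)
    (fun t ht => ((hf t (interior_subset ht)).mono interior_subset))
    (fun t ht => h0 t (interior_subset ht))

/-- Linear growth from a derivative bounded below. -/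
lemma growth_from_deriv {D : Set ℝ} (hD : Convex ℝ D) {f F : ℝ → ℝ} {k : ℝ}
    (hf : ∀ t ∈ D, HasDerivWithinAt f (F t) D t) (hk : ∀ t ∈ D, k ≤ F t) :
    ∀ a ∈ D, ∀ t ∈ D, a ≤ t → f a + k * (t - a) ≤ f t := by
  intro a ha t ht hat
  have hmono := mono_from_deriv hD (f := fun s => f s - k * s) (F := fun s => F s - k)
    (fun s hs => by
      have h := (hf s hs).sub (((hasDerivAt_id s).const_mul k).hasDerivWithinAt)
      rw [mul_one] at h
      exact h)
    (fun s hs => sub_nonneg.2 (hk s hs))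
  have := hmono ha ht hat
  simp only at this
  linarith

section CaseA

variable {γ : ℝ} {σb c N : ℝ → ℝ}

lemma caseA_c_to_zero (hγ : 0 < γ)
    (hσd : ∀ t ∈ Ici (0:ℝ), HasDerivWithinAt σb (2*γ*(c t - σb t)/N t) (Ici 0) t)
    (hcd : ∀ t ∈ Ici (0:ℝ), HasDerivWithinAt c (2*γ*(σb t)^2*(σb t - 2*c t)/N t) (Ici 0) t)
    (hσp : ∀ t ∈ Ici (0:ℝ), 0 < σb t) (hcp : ∀ t ∈ Ici (0:ℝ), 0 < c t)
    (hNp : ∀ t ∈ Ici (0:ℝ), 0 < N t)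
    (hNsq : ∀ t ∈ Ici (0:ℝ), (N t)^2 = 4*((σb t - c t)^2 + (σb t)^2*(σb t - 2*c t)^2))
    (h : Tendsto σb atTop (𝓝 0)) : Tendsto c atTop (𝓝 0) := by
  rw [Metric.tendsto_atTop] at h ⊢
  intro ε hε
  set d := ε/2 with hd
  have hdpos : 0 < d := by positivity
  obtain ⟨T₀, hT₀⟩ := h (d/2) (by positivity)
  set T₁ := max T₀ 0 with hT₁def
  have hT₁mem : T₁ ∈ Ici (0:ℝ) := mem_Ici.2 (le_max_right _ _)
  have hσsmall : ∀ t ≥ T₁, σb t < d/2 := by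
    intro t htT
    have h1 := hT₀ t (le_trans (le_max_left _ _) htT)
    have h2 := hσp t (le_trans (le_max_right _ _) htT)
    rw [Real.dist_eq, sub_zero, abs_of_pos h2] at h1
    exact h1
  -- Step 1: find T₂ ≥ T₁ with c T₂ < d
  have hstep1 : ∃ T₂ ≥ T₁, c T₂ < d := by
    by_contra hno
    push_neg at hno
    set k := γ/(2*(1+d)) with hk
    have hkpos : 0 < k := by positivity
    have hIci : Ici T₁ ⊆ Ici (0:ℝ) := fun u hu => mem_Ici.2 (le_trans (mem_Ici.1 hT₁mem) (mem_Ici.1 hu))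
    have hbound : ∀ t ∈ Ici T₁, k ≤ 2*γ*(c t - σb t)/N t := by
      intro t ht
      have htmem : t ∈ Ici (0:ℝ) := hIci ht
      have hσs := hσsmall t ht
      have hcb := hno t ht
      have hσ0 := hσp t htmem
      have hc0 := hcp t htmem
      have hN0 := hNp t htmem
      have hNs := hNsq t htmem
      have hcσ : 2 * σb t ≤ c t := by linarith
      have h1 : σb t * (2 * c t - σb t) ≤ 2 * d * (c t - σb t) := by nlinarith
      have h1a : 0 ≤ σb t * (2 * c t - σb t) := by nlinarith
      have h1b : (σb t * (2 * c t - σb t))^2 ≤ (2 * d * (c t - σb t))^2 :=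
        pow_le_pow_left₀ h1a h1 2
      have h2 : (N t)^2 ≤ (4*(1+d)*(c t - σb t))^2 := by
        nlinarith [h1b, sq_nonneg (c t - σb t), mul_nonneg hdpos.le (sq_nonneg (c t - σb t))]
      have hcσ2 : 0 < c t - σb t := by linarith
      have hM : 0 < 4*(1+d)*(c t - σb t) := by positivity
      have hNle : N t ≤ 4*(1+d)*(c t - σb t) := by
        nlinarith [h2, hN0, hM, sq_nonneg (N t - 4*(1+d)*(c t - σb t))]
      rw [le_div_iff₀ hN0, hk, div_mul_eq_mul_div, div_le_iff₀ (by positivity : (0:ℝ) < 2*(1+d))]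
      nlinarith [hNle]
    have hmem2 : T₁ + d/k ∈ Ici T₁ := mem_Ici.2 (le_add_of_nonneg_right (by positivity))
    have hgrow := growth_from_deriv (convex_Ici T₁) (f := σb)
      (F := fun t => 2*γ*(c t - σb t)/N t) (k := k)
      (fun t ht => (hσd t (hIci ht)).mono hIci) hbound
      T₁ self_mem_Ici (T₁ + d/k) hmem2 (le_add_of_nonneg_right (by positivity))
    have hσT := hσp T₁ hT₁mem
    have h2 := hσsmall (T₁ + d/k) hmem2
    have h3 : k * (T₁ + d/k - T₁) = d := by
      field_simp
      ring
    linarith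
  obtain ⟨T₂, hT₂T₁, hcT₂⟩ := hstep1
  have hT₂mem : T₂ ∈ Ici (0:ℝ) := le_trans hT₁mem hT₂T₁
  -- Step 2: barrier at level d on Ici T₂
  have hIci : Ici T₂ ⊆ Ici (0:ℝ) := fun u hu => mem_Ici.2 (le_trans (mem_Ici.1 hT₂mem) (mem_Ici.1 hu))
  have hbar := no_upcross (convex_Ici T₂) (f := c)
    (F := fun t => 2*γ*(σb t)^2*(σb t - 2*c t)/N t)
    (fun t ht => (hcd t (hIci ht)).mono hIci) (lvl := d)
    (fun t ht hct => ?_) (self_mem_Ici) hcT₂.le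
  · refine ⟨T₂, fun t htT => ?_⟩
    have h1 := hbar t htT htT
    have h2 := hcp t (hIci htT)
    rw [Real.dist_eq, sub_zero, abs_of_pos h2]
    calc c t ≤ d := h1
    _ < ε := by rw [hd]; linarith
  · have htmem := hIci ht
    have hσs := hσsmall t (le_trans hT₂T₁ ht)
    have hσ0 := hσp t htmem
    have hN0 := hNp t htmem
    apply div_neg_of_neg_of_pos _ hN0
    rw [hct]
    have := mul_neg_of_pos_of_neg (by positivity : (0:ℝ) < 2*γ*σb t^2)
      (by linarith : σb t - 2*d < 0)
    linarith

lemma caseA_sigma_to_zero (hγ : 0 < γ)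
    (hσd : ∀ t ∈ Ici (0:ℝ), HasDerivWithinAt σb (2*γ*(c t - σb t)/N t) (Ici 0) t)
    (hcd : ∀ t ∈ Ici (0:ℝ), HasDerivWithinAt c (2*γ*(σb t)^2*(σb t - 2*c t)/N t) (Ici 0) t)
    (hσp : ∀ t ∈ Ici (0:ℝ), 0 < σb t) (hcp : ∀ t ∈ Ici (0:ℝ), 0 < c t)
    (hNp : ∀ t ∈ Ici (0:ℝ), 0 < N t)
    (hNsq : ∀ t ∈ Ici (0:ℝ), (N t)^2 = 4*((σb t - c t)^2 + (σb t)^2*(σb t - 2*c t)^2))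
    (h : Tendsto c atTop (𝓝 0)) : Tendsto σb atTop (𝓝 0) := by
  rw [Metric.tendsto_atTop] at h ⊢
  intro ε hε
  set e := ε/2 with hd
  have hepos : 0 < e := by positivity
  obtain ⟨T₀, hT₀⟩ := h (e/8) (by positivity)
  set T₁ := max T₀ 0 with hT₁def
  have hT₁mem : T₁ ∈ Ici (0:ℝ) := mem_Ici.2 (le_max_right _ _)
  have hcsmall : ∀ t ≥ T₁, c t < e/8 := by
    intro t htT
    have h1 := hT₀ t (le_trans (le_max_left _ _) htT)
    have h2 := hcp t (le_trans (le_max_right _ _) htT)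
    rw [Real.dist_eq, sub_zero, abs_of_pos h2] at h1
    exact h1
  have hstep1 : ∃ T₂ ≥ T₁, σb T₂ < e := by
    by_contra hno
    push_neg at hno
    set k := 3*γ*e^2/(4*(1+e)) with hk
    have hkpos : 0 < k := by positivity
    have hIci : Ici T₁ ⊆ Ici (0:ℝ) := fun u hu => mem_Ici.2 (le_trans (mem_Ici.1 hT₁mem) (mem_Ici.1 hu))
    have hbound : ∀ t ∈ Ici T₁, k ≤ 2*γ*(σb t)^2*(σb t - 2*c t)/N t := by
      intro t ht
      have htmem : t ∈ Ici (0:ℝ) := hIci ht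
      have hcs := hcsmall t ht
      have hσe := hno t ht
      have hσ0 := hσp t htmem
      have hc0 := hcp t htmem
      have hN0 := hNp t htmem
      have hNs := hNsq t htmem
      have hcσ : c t < σb t := by linarith
      have h2 : (N t)^2 ≤ (2*(σb t)*(1+σb t))^2 := by
        nlinarith [sq_nonneg (σb t - c t), sq_nonneg (σb t - 2*c t), sq_nonneg (σb t),
          mul_pos hc0 hσ0, mul_pos (mul_pos hc0 hc0) hσ0,
          mul_pos (mul_pos hc0 hσ0) hσ0]
      have hM : 0 < 2*(σb t)*(1+σb t) := by positivity
      have hNle : N t ≤ 2*(σb t)*(1+σb t) := by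
        nlinarith [h2, hN0, hM, sq_nonneg (N t - 2*(σb t)*(1+σb t))]
      rw [le_div_iff₀ hN0, hk, div_mul_eq_mul_div, div_le_iff₀ (by positivity : (0:ℝ) < 4*(1+e))]
      have hs34 : 3*σb t/4 ≤ σb t - 2*c t := by linarith
      have hL : 3*γ*e^2*(N t) ≤ 3*γ*e^2*(2*(σb t)*(1+σb t)) :=
        mul_le_mul_of_nonneg_left hNle (by positivity)
      have hR : 8*γ*(1+e)*(σb t)^2*(3*σb t/4) ≤ 8*γ*(1+e)*(σb t)^2*(σb t - 2*c t) :=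
        mul_le_mul_of_nonneg_left hs34 (by positivity)
      have hmid : 3*γ*e^2*(2*(σb t)*(1+σb t)) ≤ 8*γ*(1+e)*(σb t)^2*(3*σb t/4) := by
        nlinarith [mul_nonneg (mul_nonneg hγ.le hepos.le) (mul_nonneg (sq_nonneg (σb t)) (sub_nonneg.2 hσe)),
          mul_nonneg (mul_nonneg hγ.le hσ0.le) (mul_nonneg (mul_nonneg hσ0.le hσ0.le) (sub_nonneg.2 hσe)),
          mul_nonneg (mul_nonneg hγ.le hσ0.le) (mul_nonneg (mul_nonneg hepos.le hσ0.le) (sub_nonneg.2 hσe)),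
          mul_nonneg (mul_nonneg hγ.le hepos.le) (mul_nonneg (mul_nonneg hepos.le hσ0.le) (sub_nonneg.2 hσe))]
      calc 3*γ*e^2*(N t) ≤ 8*γ*(1+e)*(σb t)^2*(σb t - 2*c t) := le_trans hL (le_trans hmid hR)
      _ = 2*γ*(σb t)^2*(σb t - 2*c t)*(4*(1+e)) := by ring
    have hmem2 : T₁ + e/(8*k) ∈ Ici T₁ := mem_Ici.2 (le_add_of_nonneg_right (by positivity))
    have hgrow := growth_from_deriv (convex_Ici T₁) (f := c)
      (F := fun t => 2*γ*(σb t)^2*(σb t - 2*c t)/N t) (k := k)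
      (fun t ht => (hcd t (hIci ht)).mono hIci) hbound
      T₁ self_mem_Ici (T₁ + e/(8*k)) hmem2 (le_add_of_nonneg_right (by positivity))
    have hcT := hcp T₁ hT₁mem
    have h2 := hcsmall (T₁ + e/(8*k)) hmem2
    have h3 : k * (T₁ + e/(8*k) - T₁) = e/8 := by
      field_simp
      ring
    linarith
  obtain ⟨T₂, hT₂T₁, hσT₂⟩ := hstep1
  have hT₂mem : T₂ ∈ Ici (0:ℝ) := le_trans hT₁mem hT₂T₁
  have hIci : Ici T₂ ⊆ Ici (0:ℝ) := fun u hu => mem_Ici.2 (le_trans (mem_Ici.1 hT₂mem) (mem_Ici.1 hu))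
  have hbar := no_upcross (convex_Ici T₂) (f := σb)
    (F := fun t => 2*γ*(c t - σb t)/N t)
    (fun t ht => (hσd t (hIci ht)).mono hIci) (lvl := e)
    (fun t ht hσt => ?_) (self_mem_Ici) hσT₂.le
  · refine ⟨T₂, fun t htT => ?_⟩
    have h1 := hbar t htT htT
    have h2 := hσp t (hIci htT)
    rw [Real.dist_eq, sub_zero, abs_of_pos h2]
    calc σb t ≤ e := h1
    _ < ε := by rw [hd]; linarith
  · have htmem := hIci ht
    have hcs := hcsmall t (le_trans hT₂T₁ ht)
    have hN0 := hNp t htmem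
    apply div_neg_of_neg_of_pos _ hN0
    rw [hσt]
    have := mul_pos hγ (show 0 < e - c t by linarith)
    nlinarith
end CaseA


noncomputable def G1aux (y : EuclideanSpace ℝ (Fin 3)) : ℝ :=
  2 * y 0 - 4 * y 1 * y 2 - 2 * y 2 * y 0 / sigmaBI y + 2 * y 1 * sigmaBI y
noncomputable def G2aux (y : EuclideanSpace ℝ (Fin 3)) : ℝ :=
  2 * y 1 + 4 * y 0 * y 2 - 2 * y 2 * y 1 / sigmaBI y - 2 * y 0 * sigmaBI y
noncomputable def NGaux (y : EuclideanSpace ℝ (Fin 3)) : ℝ :=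
  Real.sqrt (G1aux y ^ 2 + G2aux y ^ 2)
noncomputable def RHSaux (γ : ℝ) (y : EuclideanSpace ℝ (Fin 3)) :
    EuclideanSpace ℝ (Fin 3) :=
  (WithLp.equiv 2 (Fin 3 → ℝ)).symm
    ![-γ * G1aux y / NGaux y,
      -γ * G2aux y / NGaux y,
      y 0 * (-γ * G2aux y / NGaux y) - y 1 * (-γ * G1aux y / NGaux y)]

lemma g1_eq_G1 {y : EuclideanSpace ℝ (Fin 3)} (hc : 0 < y 2) : g1BI y = G1aux y := by
  rw [g1BI, G1aux, Real.sign_of_pos hc, abs_of_pos hc]; ring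
lemma g2_eq_G2 {y : EuclideanSpace ℝ (Fin 3)} (hc : 0 < y 2) : g2BI y = G2aux y := by
  rw [g2BI, G2aux, Real.sign_of_pos hc, abs_of_pos hc]; ring
lemma ng_eq_NG {y : EuclideanSpace ℝ (Fin 3)} (hc : 0 < y 2) : ngBI y = NGaux y := by
  rw [ngBI, NGaux, g1_eq_G1 hc, g2_eq_G2 hc]
lemma rhs_eq_RHSaux {γ : ℝ} {y : EuclideanSpace ℝ (Fin 3)} (hc : 0 < y 2) :
    brockettRHS γ y = RHSaux γ y := by
  rw [brockettRHS, RHSaux, g1_eq_G1 hc, g2_eq_G2 hc, ng_eq_NG hc]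

lemma isOpen_c_pos : IsOpen {y : EuclideanSpace ℝ (Fin 3) | 0 < y 2} :=
  isOpen_lt continuous_const (EuclideanSpace.proj (2 : Fin 3) (𝕜 := ℝ)).continuous

lemma rhs_eventuallyEq {γ : ℝ} {L : EuclideanSpace ℝ (Fin 3)} (hL2 : 0 < L 2) :
    brockettRHS γ =ᶠ[𝓝 L] RHSaux γ :=
  Filter.eventually_of_mem (isOpen_c_pos.mem_nhds hL2) fun _ hy => rhs_eq_RHSaux hy

section
variable {γ : ℝ} {L : EuclideanSpace ℝ (Fin 3)}

lemma ng_pos' (hσ : sigmaBI L ≠ 0) (hc : 0 < L 2) : 0 < g1BI L ^ 2 + g2BI L ^ 2 :=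
  Real.sqrt_pos.1 (ng_pos hσ hc)

lemma rhs_contDiffAt (hσL : sigmaBI L ≠ 0) (hL2 : 0 < L 2) :
    ContDiffAt ℝ 1 (brockettRHS γ) L := by
  have hp : ∀ i : Fin 3, ContDiffAt ℝ 1 (fun y : EuclideanSpace ℝ (Fin 3) => y i) L :=
    fun i => (EuclideanSpace.proj i (𝕜 := ℝ)).contDiff.contDiffAt
  have hargne : L 0 ^ 2 + L 1 ^ 2 ≠ 0 := by
    rw [← sigma_sq]; exact pow_ne_zero _ hσL
  have hσc : ContDiffAt ℝ 1 (fun y : EuclideanSpace ℝ (Fin 3) => sigmaBI y) L := by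
    unfold sigmaBI
    exact (((hp 0).pow 2).add ((hp 1).pow 2)).sqrt hargne
  have hG1 : ContDiffAt ℝ 1 G1aux L := by
    unfold G1aux
    exact (((contDiffAt_const (c := (2:ℝ))).mul (hp 0)).sub
        (((contDiffAt_const (c := (4:ℝ))).mul (hp 1)).mul (hp 2))).sub
        ((((contDiffAt_const (c := (2:ℝ))).mul (hp 2)).mul (hp 0)).div hσc hσL) |>.add
        (((contDiffAt_const (c := (2:ℝ))).mul (hp 1)).mul hσc)
  have hG2 : ContDiffAt ℝ 1 G2aux L := by
    unfold G2aux
    exact (((contDiffAt_const (c := (2:ℝ))).mul (hp 1)).add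
        (((contDiffAt_const (c := (4:ℝ))).mul (hp 0)).mul (hp 2))).sub
        ((((contDiffAt_const (c := (2:ℝ))).mul (hp 2)).mul (hp 1)).div hσc hσL) |>.sub
        (((contDiffAt_const (c := (2:ℝ))).mul (hp 0)).mul hσc)
  have hsumpos : 0 < G1aux L ^ 2 + G2aux L ^ 2 := by
    rw [← g1_eq_G1 hL2, ← g2_eq_G2 hL2]
    exact ng_pos' hσL hL2
  have hNG : ContDiffAt ℝ 1 NGaux L := by
    unfold NGaux
    exact ((hG1.pow 2).add (hG2.pow 2)).sqrt hsumpos.ne'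
  have hNGne : NGaux L ≠ 0 := (Real.sqrt_pos.2 hsumpos).ne'
  have hv0 : ContDiffAt ℝ 1 (fun y => -γ * G1aux y / NGaux y) L :=
    ((contDiffAt_const (c := -γ)).mul hG1).div hNG hNGne
  have hv1 : ContDiffAt ℝ 1 (fun y => -γ * G2aux y / NGaux y) L :=
    ((contDiffAt_const (c := -γ)).mul hG2).div hNG hNGne
  have hv2 : ContDiffAt ℝ 1
      (fun y : EuclideanSpace ℝ (Fin 3) =>
        y 0 * (-γ * G2aux y / NGaux y) - y 1 * (-γ * G1aux y / NGaux y)) L :=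
    ((hp 0).mul hv1).sub ((hp 1).mul hv0)
  have hvec : ContDiffAt ℝ 1
      (fun y : EuclideanSpace ℝ (Fin 3) =>
        (![-γ * G1aux y / NGaux y,
          -γ * G2aux y / NGaux y,
          y 0 * (-γ * G2aux y / NGaux y) - y 1 * (-γ * G1aux y / NGaux y)]
          : Fin 3 → ℝ)) L := by
    rw [contDiffAt_pi]
    intro i
    fin_cases i
    · simpa using hv0
    · simpa using hv1
    · simpa using hv2
  have hRHSaux : ContDiffAt ℝ 1 (RHSaux γ) L := by
    have := ((PiLp.continuousLinearEquiv 2 ℝ (fun _ : Fin 3 => ℝ)).symm.contDiff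
        (n := (1 : ℕ∞))).contDiffAt.comp L hvec
    exact this
  exact hRHSaux.congr_of_eventuallyEq (rhs_eventuallyEq hL2)
end


section CaseB
variable {γ T : ℝ} {x : ℝ → EuclideanSpace ℝ (Fin 3)}

lemma c_pos_on {S : Set ℝ} (hS0 : ∀ t ∈ S, (0:ℝ) ≤ t) (h0S : (0:ℝ) ∈ S)
    (hOC : S.OrdConnected)
    (hcont : ∀ t ∈ S, ContinuousWithinAt (fun s => x s 2) S t)
    (hne : ∀ t ∈ S, x t 2 ≠ 0) (h0 : 0 < x 0 2) : ∀ t ∈ S, 0 < x t 2 := by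
  intro t ht
  rcases (hne t ht).lt_or_gt with hlt | h
  · exfalso
    have hsub : Icc (0:ℝ) t ⊆ S := hOC.out h0S ht
    have hcont' : ContinuousOn (fun s => x s 2) (Icc 0 t) :=
      fun s hs => ((hcont s (hsub hs)).mono hsub)
    have h0t : (0:ℝ) ≤ t := hS0 t ht
    have h0mem : (0:ℝ) ∈ Icc (x t 2) (x 0 2) := ⟨hlt.le, h0.le⟩
    obtain ⟨s, hs, hfs⟩ := intermediate_value_Icc' h0t hcont' h0mem
    exact hne s (hsub hs) hfs
  · exact h

lemma caseB_interior (hγ : 0 < γ) (hT : 0 < T)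
    (hode : ∀ t ∈ Ico 0 T, HasDerivWithinAt x (brockettRHS γ (x t)) (Ico 0 T) t)
    (hoff : ∀ t ∈ Ico 0 T, sigmaBI (x t) ≠ 0 ∧ x t 2 ≠ 0)
    {L : EuclideanSpace ℝ (Fin 3)} (hLt : Tendsto x (𝓝[<] T) (𝓝 L))
    (hσL : sigmaBI L ≠ 0) (hL2 : 0 < L 2) :
    ∃ ε > 0, ∃ y : ℝ → EuclideanSpace ℝ (Fin 3),
      (∀ t : ℝ, 0 ≤ t → t < T → y t = x t) ∧
      ∀ t ∈ Ico 0 (T + ε), sigmaBI (y t) ≠ 0 ∧ y t 2 ≠ 0 ∧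
        HasDerivWithinAt y (brockettRHS γ (y t)) (Ico 0 (T + ε)) t := by
  have hcda : ContDiffAt ℝ 1 (brockettRHS γ) L := rhs_contDiffAt hσL hL2
  obtain ⟨f, hfT, ε₀, hε₀, hf⟩ :=
    hcda.exists_forall_mem_closedBall_exists_eq_forall_mem_Ioo_hasDerivAt₀ T
  have hTmem : T ∈ Ioo (T - ε₀) (T + ε₀) := ⟨by linarith, by linarith⟩
  have hfcont : ContinuousAt f T := (hf T hTmem).continuousAt
  have hσopen : IsOpen {y : EuclideanSpace ℝ (Fin 3) | 0 < sigmaBI y} := by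
    have hσcont : Continuous (fun y : EuclideanSpace ℝ (Fin 3) => sigmaBI y) := by
      apply Real.continuous_sqrt.comp
      exact (((EuclideanSpace.proj (0 : Fin 3) (𝕜 := ℝ)).continuous.pow 2)).add
        (((EuclideanSpace.proj (1 : Fin 3) (𝕜 := ℝ)).continuous.pow 2))
    exact isOpen_lt continuous_const hσcont
  have hU : IsOpen ({y : EuclideanSpace ℝ (Fin 3) | 0 < y 2}
      ∩ {y | 0 < sigmaBI y}) := isOpen_c_pos.inter hσopen
  have hLU : L ∈ {y : EuclideanSpace ℝ (Fin 3) | 0 < y 2} ∩ {y | 0 < sigmaBI y} :=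
    ⟨hL2, (Real.sqrt_nonneg _).lt_of_ne' hσL⟩
  have hevU : ∀ᶠ t in 𝓝 T, 0 < f t 2 ∧ 0 < sigmaBI (f t) :=
    hfcont.preimage_mem_nhds (hU.mem_nhds (by rw [hfT]; exact hLU))
  obtain ⟨ε₁, hε₁, hball⟩ := Metric.eventually_nhds_iff.1 hevU
  set ε := min ε₁ ε₀ / 2 with hεdef
  have hεpos : 0 < ε := by positivity
  have hεε₁ : ε < ε₁ := by
    have := min_le_left ε₁ ε₀; have := lt_min hε₁ hε₀; simp only [hεdef]; linarith [min_le_left ε₁ ε₀, lt_min hε₁ hε₀]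
  have hεε₀ : ε < ε₀ := by
    simp only [hεdef]; linarith [min_le_right ε₁ ε₀, lt_min hε₁ hε₀]
  set B := Ico (0:ℝ) (T + ε) with hBdef
  set y := fun t => if t < T then x t else f t with hydef
  have hyx : ∀ t : ℝ, t < T → y t = x t := fun t ht => if_pos ht
  have hyf : ∀ t : ℝ, T ≤ t → y t = f t := fun t ht => if_neg (not_lt.2 ht)
  have hyT : y T = L := by rw [hyf T le_rfl, hfT]
  have hIcoEq : Ico (0:ℝ) T = B ∩ Iio T := by
    rw [hBdef]; ext u
    constructor
    · exact fun hu => ⟨⟨hu.1, by linarith [hu.2]⟩, hu.2⟩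
    · exact fun hu => ⟨hu.1.1, hu.2⟩
  have hRHScont : ContinuousAt (brockettRHS γ) L := hcda.continuousAt
  refine ⟨ε, hεpos, y, fun t ht0 htT => hyx t htT, ?_⟩
  intro t htB
  rcases lt_or_ge t T with htlt | htge
  · -- t < T
    have htS : t ∈ Ico 0 T := ⟨htB.1, htlt⟩
    have hop := hoff t htS
    refine ⟨by rw [hyx t htlt]; exact hop.1, by rw [hyx t htlt]; exact hop.2, ?_⟩
    have h0 := hode t htS
    rw [hIcoEq] at h0
    have h1 : HasDerivWithinAt x (brockettRHS γ (x t)) B t :=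
      (hasDerivWithinAt_inter (Iio_mem_nhds htlt)).1 h0
    have hev : y =ᶠ[𝓝[B] t] x :=
      Filter.eventually_of_mem (mem_nhdsWithin_of_mem_nhds (Iio_mem_nhds htlt))
        (fun u hu => hyx u hu)
    have h2 := h1.congr_of_eventuallyEq hev (hyx t htlt)
    rwa [hyx t htlt]
  · -- t ≥ T
    have htdist : dist t T < ε₁ := by
      rw [Real.dist_eq, abs_of_nonneg (by linarith : (0:ℝ) ≤ t - T)]
      have h := htB.2
      linarith
    have hcond := hball htdist
    have hσt : sigmaBI (y t) ≠ 0 := by rw [hyf t htge]; exact hcond.2.ne'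
    have hct : y t 2 ≠ 0 := by rw [hyf t htge]; exact hcond.1.ne'
    refine ⟨hσt, hct, ?_⟩
    rcases eq_or_lt_of_le htge with hteq | htgt
    · -- t = T : glue
      subst hteq
      have hIooSub : Ioo (T/2) T ⊆ Ico 0 T := fun u hu => ⟨by linarith [hu.1], hu.2⟩
      have hdiff : DifferentiableOn ℝ y (Ioo (T/2) T) := by
        intro u hu
        have hu' : u ∈ Ico 0 T := hIooSub hu
        have hx1 := (hode u hu').mono hIooSub
        exact (hx1.congr (fun v hv => hyx v hv.2) (hyx u hu.2)).differentiableWithinAt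
      have hlim : ContinuousWithinAt y (Ioo (T/2) T) T := by
        have h1 : Tendsto x (𝓝[Ioo (T/2) T] T) (𝓝 L) :=
          hLt.mono_left (nhdsWithin_mono T Ioo_subset_Iio_self)
        have h2 : Tendsto y (𝓝[Ioo (T/2) T] T) (𝓝 L) :=
          h1.congr' (Filter.eventually_of_mem self_mem_nhdsWithin
            (fun u hu => (hyx u hu.2).symm))
        rw [ContinuousWithinAt, hyT]
        exact h2
      have hs : Ioo (T/2) T ∈ 𝓝[<] T := Ioo_mem_nhdsLT_of_mem ⟨by linarith, le_rfl⟩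
      have hderiv_ev : (fun u => brockettRHS γ (x u)) =ᶠ[𝓝[<] T] deriv y := by
        apply Filter.eventually_of_mem hs
        intro u hu
        have hu' : u ∈ Ico 0 T := hIooSub hu
        have hnhds : Ico 0 T ∈ 𝓝 u :=
          mem_nhds_iff.2 ⟨Ioo 0 T, Ioo_subset_Ico_self, isOpen_Ioo, ⟨by linarith [hu.1], hu.2⟩⟩
        have hDA : HasDerivAt x (brockettRHS γ (x u)) u := (hode u hu').hasDerivAt hnhds
        have hDA2 : HasDerivAt y (brockettRHS γ (x u)) u :=
          hDA.congr_of_eventuallyEq (Filter.eventually_of_mem (Iio_mem_nhds hu.2)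
            (fun v hv => hyx v hv))
        exact (hDA2.deriv).symm
      have hlim' : Tendsto (deriv y) (𝓝[<] T) (𝓝 (brockettRHS γ L)) := by
        have h1 : Tendsto (fun u => brockettRHS γ (x u)) (𝓝[<] T) (𝓝 (brockettRHS γ L)) :=
          hRHScont.tendsto.comp hLt
        exact h1.congr' hderiv_ev
      have hLft : HasDerivWithinAt y (brockettRHS γ L) (Iic T) T :=
        hasDerivWithinAt_Iic_of_tendsto_deriv hdiff hlim hs hlim'
      have hR : HasDerivWithinAt y (brockettRHS γ L) (Ici T) T := by
        have hfd : HasDerivAt f (brockettRHS γ (f T)) T := hf T hTmem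
        rw [hfT] at hfd
        exact hfd.hasDerivWithinAt.congr_of_eventuallyEq
          (Filter.eventually_of_mem self_mem_nhdsWithin (fun u hu => hyf u hu))
          (by rw [hyT, hfT])
      have hunion := hLft.union hR
      have hBsub : B ⊆ Iic T ∪ Ici T := fun u _ => (le_total u T).imp id id
      have := hunion.mono hBsub
      rwa [hyT]
    · -- t > T
      have htIoo : t ∈ Ioo (T - ε₀) (T + ε₀) := by
        constructor
        · linarith
        · have h := htB.2
          linarith
      have hfd : HasDerivAt f (brockettRHS γ (f t)) t := hf t htIoo
      have hev : y =ᶠ[𝓝[B] t] f :=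
        Filter.eventually_of_mem (mem_nhdsWithin_of_mem_nhds (Ioi_mem_nhds htgt))
          (fun u hu => hyf u (le_of_lt hu))
      have h2 := hfd.hasDerivWithinAt.congr_of_eventuallyEq hev (hyf t htge)
      rwa [hyf t htge]

lemma caseB (hγ : 0 < γ) (hT : 0 < T)
    (hode : ∀ t ∈ Ico 0 T, HasDerivWithinAt x (brockettRHS γ (x t)) (Ico 0 T) t)
    (hoff : ∀ t ∈ Ico 0 T, sigmaBI (x t) ≠ 0 ∧ x t 2 ≠ 0)
    (hc00 : 0 < x 0 2)
    (hext : ∀ ε > 0, ¬ ∃ y : ℝ → EuclideanSpace ℝ (Fin 3),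
      (∀ t : ℝ, 0 ≤ t → t < T → y t = x t) ∧
      ∀ t ∈ Ico 0 (T + ε), sigmaBI (y t) ≠ 0 ∧ y t 2 ≠ 0 ∧
        HasDerivWithinAt y (brockettRHS γ (y t)) (Ico 0 (T + ε)) t) :
    Tendsto x (𝓝[<] T) (𝓝 0) := by
  have h0S : (0:ℝ) ∈ Ico 0 T := ⟨le_rfl, hT⟩
  have hcpos : ∀ t ∈ Ico 0 T, 0 < x t 2 :=
    c_pos_on (fun t ht => ht.1) h0S Set.ordConnected_Ico
      (fun t ht => (comp_deriv (hode t ht) 2).continuousWithinAt)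
      (fun t ht => (hoff t ht).2) hc00
  have hσpos : ∀ t ∈ Ico 0 T, 0 < sigmaBI (x t) := fun t ht => sigma_pos (hoff t ht).1
  have hσd : ∀ t ∈ Ico 0 T, HasDerivWithinAt (fun s => sigmaBI (x s))
      (2*γ*(x t 2 - sigmaBI (x t))/ngBI (x t)) (Ico 0 T) t :=
    fun t ht => sigma_deriv (hode t ht) (hoff t ht).1 (hcpos t ht)
  have hcd : ∀ t ∈ Ico 0 T, HasDerivWithinAt (fun s => x s 2)
      (2*γ*(sigmaBI (x t))^2*(sigmaBI (x t) - 2*(x t 2))/ngBI (x t)) (Ico 0 T) t :=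
    fun t ht => c_deriv (hode t ht) (hoff t ht).1 (hcpos t ht)
  have hNpos : ∀ t ∈ Ico 0 T, 0 < ngBI (x t) :=
    fun t ht => ng_pos (hoff t ht).1 (hcpos t ht)
  have hNsq : ∀ t ∈ Ico 0 T, ngBI (x t)^2
      = 4*((sigmaBI (x t) - x t 2)^2 + (sigmaBI (x t))^2*(sigmaBI (x t) - 2*(x t 2))^2) :=
    fun t ht => ng_sq (hoff t ht).1 (hcpos t ht)
  -- σ is bounded
  have hσbd : ∀ t ∈ Ico 0 T, sigmaBI (x t) ≤ sigmaBI (x 0) + γ*T := by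
    have hbound : ∀ s ∈ Ico 0 T,
        -γ ≤ -(2*γ*(x s 2 - sigmaBI (x s))/ngBI (x s)) := by
      intro s hs
      have hN0 := hNpos s hs
      have hNs := hNsq s hs
      have hle : 2*(x s 2 - sigmaBI (x s)) ≤ ngBI (x s) := by
        nlinarith [sq_nonneg (ngBI (x s) - 2*(x s 2 - sigmaBI (x s))), hN0,
          sq_nonneg (sigmaBI (x s)*(sigmaBI (x s) - 2*(x s 2)))]
      rw [neg_le, neg_neg, div_le_iff₀ hN0]
      nlinarith [hle]
    intro t ht
    have hgrow := growth_from_deriv (convex_Ico 0 T)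
      (f := fun s => -sigmaBI (x s))
      (F := fun s => -(2*γ*(x s 2 - sigmaBI (x s))/ngBI (x s))) (k := -γ)
      (fun s hs => (hσd s hs).neg) hbound 0 h0S t ht ht.1
    have hgrow' : -sigmaBI (x 0) + -γ*(t-0) ≤ -sigmaBI (x t) := hgrow
    have h2 := ht.2
    nlinarith [hgrow', mul_le_mul_of_nonneg_left h2.le hγ.le]
  set M := γ*(1 + (sigmaBI (x 0) + γ*T)) with hMdef
  have hσ00 := hσpos 0 h0S
  have hMpos : 0 < M := by
    apply mul_pos hγ
    nlinarith
  have hrhsbd : ∀ t ∈ Ico 0 T, ‖brockettRHS γ (x t)‖ ≤ M := by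
    intro t ht
    refine (rhs_norm_le hγ (hoff t ht).1 (hcpos t ht)).trans ?_
    have := hσbd t ht
    rw [hMdef]
    apply mul_le_mul_of_nonneg_left (by linarith) hγ.le
  have hlip : ∀ s ∈ Ico 0 T, ∀ t ∈ Ico 0 T, ‖x t - x s‖ ≤ M * ‖t - s‖ :=
    fun s hs t ht => Convex.norm_image_sub_le_of_norm_hasDerivWithin_le
      hode hrhsbd (convex_Ico 0 T) hs ht
  have hIcoMem : Ico 0 T ∈ 𝓝[<] T := by
    have h1 : Ioo (max 0 (T-1)) T ∈ 𝓝[<] T :=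
      Ioo_mem_nhdsLT_of_mem ⟨max_lt hT (by linarith), le_rfl⟩
    exact Filter.mem_of_superset h1
      (fun u hu => ⟨(le_max_left 0 (T-1)).trans hu.1.le, hu.2⟩)
  have hevS : ∀ᶠ t in 𝓝[<] T, t ∈ Ico 0 T := hIcoMem
  -- Cauchy
  have hcauchy : Cauchy (Filter.map x (𝓝[<] T)) := by
    rw [Metric.cauchy_iff]
    constructor
    · exact Filter.NeBot.map inferInstance x
    · intro ε hε
      set δ := min (ε / (M+1)) T with hδdef
      have hδpos : 0 < δ := lt_min (by positivity) hT
      have hδT : δ ≤ T := min_le_right _ _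
      have hδε : M * δ < ε := by
        have h1 : δ ≤ ε/(M+1) := min_le_left _ _
        have h2 : M * δ ≤ M * (ε/(M+1)) := mul_le_mul_of_nonneg_left h1 hMpos.le
        have h3 : M * (ε/(M+1)) < ε := by
          rw [mul_div_assoc']
          rw [div_lt_iff₀ (by linarith)]
          nlinarith
        linarith
      refine ⟨x '' Ioo (T-δ) T, Filter.image_mem_map
        (Ioo_mem_nhdsLT_of_mem ⟨by linarith, le_rfl⟩), ?_⟩
      rintro u ⟨a, ha, rfl⟩ v ⟨b, hb, rfl⟩
      have haS : a ∈ Ico 0 T := ⟨by linarith [ha.1], ha.2⟩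
      have hbS : b ∈ Ico 0 T := ⟨by linarith [hb.1], hb.2⟩
      rw [dist_eq_norm]
      calc ‖x a - x b‖ ≤ M * ‖a - b‖ := hlip b hbS a haS
      _ ≤ M * δ := by
          apply mul_le_mul_of_nonneg_left _ hMpos.le
          rw [Real.norm_eq_abs, abs_le]
          constructor <;> [linarith [ha.1, ha.2, hb.1, hb.2]; linarith [ha.1, ha.2, hb.1, hb.2]]
      _ < ε := hδε
  obtain ⟨L, hLt⟩ := CompleteSpace.complete hcauchy
  have hLt : Tendsto x (𝓝[<] T) (𝓝 L) := hLt
  -- component limits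
  have hc2L : Tendsto (fun t => x t 2) (𝓝[<] T) (𝓝 (L 2)) :=
    (((EuclideanSpace.proj (2 : Fin 3) (𝕜 := ℝ)).continuous.tendsto L).comp hLt : _)
  have hσcont : Continuous (fun y : EuclideanSpace ℝ (Fin 3) => sigmaBI y) := by
    apply Real.continuous_sqrt.comp
    exact (((EuclideanSpace.proj (0 : Fin 3) (𝕜 := ℝ)).continuous.pow 2)).add
      (((EuclideanSpace.proj (1 : Fin 3) (𝕜 := ℝ)).continuous.pow 2))
  have hσLlim : Tendsto (fun t => sigmaBI (x t)) (𝓝[<] T) (𝓝 (sigmaBI L)) :=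
    ((hσcont.tendsto L).comp hLt : _)
  have hL2nonneg : 0 ≤ L 2 :=
    ge_of_tendsto hc2L (hevS.mono fun t ht => (hcpos t ht).le)
  have hσLnonneg : (0:ℝ) ≤ sigmaBI L := Real.sqrt_nonneg _
  rcases eq_or_lt_of_le hσLnonneg with hσL0 | hσLpos
  · rcases eq_or_lt_of_le hL2nonneg with hL20 | hL2pos
    · -- L = 0 : the good case
      have harg : L 0^2 + L 1^2 = 0 := by
        have h1 : Real.sqrt (L 0^2 + L 1^2) = 0 := hσL0.symm
        nlinarith [Real.sq_sqrt (show (0:ℝ) ≤ L 0^2 + L 1^2 by positivity), h1,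
          sq_nonneg (L 0), sq_nonneg (L 1)]
      have hL0 : L 0 = 0 := by nlinarith [sq_nonneg (L 0), sq_nonneg (L 1)]
      have hL1 : L 1 = 0 := by nlinarith [sq_nonneg (L 0), sq_nonneg (L 1)]
      have hLzero : L = 0 := by
        ext i
        fin_cases i
        · exact hL0
        · exact hL1
        · exact hL20.symm
      rwa [hLzero] at hLt
    · -- σL = 0, L2 > 0 : impossible
      exfalso
      have hev1 : ∀ᶠ t in 𝓝[<] T, L 2 / 2 < x t 2 :=
        hc2L.eventually (eventually_gt_nhds (by linarith))
      have hev2 : ∀ᶠ t in 𝓝[<] T, sigmaBI (x t) < L 2 / 4 :=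
        hσLlim.eventually (eventually_lt_nhds (by linarith [hσL0.symm ▸ hL2pos]))
      have hev : ∀ᶠ t in 𝓝[<] T,
          (L 2 / 2 < x t 2 ∧ sigmaBI (x t) < L 2 / 4) ∧ t ∈ Ico 0 T :=
        (hev1.and hev2).and hevS
      obtain ⟨l, hl, hIoo⟩ := mem_nhdsLT_iff_exists_Ioo_subset.1 hev
      have hmaxlt : max l 0 < T := max_lt hl hT
      set a := (max l 0 + T)/2 with hadef
      have hal : l < a := lt_of_le_of_lt (le_max_left l 0) (by rw [hadef]; linarith)
      have haT : a < T := by rw [hadef]; linarith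
      have ha0 : 0 ≤ a := le_trans (le_max_right l 0) (by rw [hadef]; linarith)
      have haS : a ∈ Ico 0 T := ⟨ha0, haT⟩
      have hDS : Ico a T ⊆ Ico 0 T := fun u hu => ⟨le_trans ha0 hu.1, hu.2⟩
      have hDIoo : Ico a T ⊆ Ioo l T := fun u hu => ⟨lt_of_lt_of_le hal hu.1, hu.2⟩
      have hmono := mono_from_deriv (convex_Ico a T)
        (f := fun s => sigmaBI (x s))
        (F := fun t => 2*γ*(x t 2 - sigmaBI (x t))/ngBI (x t))
        (fun u hu => (hσd u (hDS hu)).mono hDS)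
        (fun u hu => by
          obtain ⟨⟨h1, h2⟩, h3⟩ := hIoo (hDIoo hu)
          apply div_nonneg _ (hNpos u (hDS hu)).le
          nlinarith)
      have hσa : 0 < sigmaBI (x a) := hσpos a haS
      have hgel : ∀ᶠ t in 𝓝[<] T, sigmaBI (x a) ≤ sigmaBI (x t) := by
        have h1 : Ioo a T ∈ 𝓝[<] T := Ioo_mem_nhdsLT_of_mem ⟨haT, le_rfl⟩
        exact Filter.mem_of_superset h1 (fun u hu =>
          hmono ⟨le_rfl, haT⟩ ⟨hu.1.le, hu.2⟩ hu.1.le)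
      have := ge_of_tendsto hσLlim hgel
      rw [← hσL0] at this
      linarith
  · rcases eq_or_lt_of_le hL2nonneg with hL20 | hL2pos
    · -- σL > 0, L2 = 0 : impossible
      exfalso
      have hev1 : ∀ᶠ t in 𝓝[<] T, sigmaBI L / 2 < sigmaBI (x t) :=
        hσLlim.eventually (eventually_gt_nhds (by linarith))
      have hev2 : ∀ᶠ t in 𝓝[<] T, x t 2 < sigmaBI L / 4 :=
        hc2L.eventually (eventually_lt_nhds (by rw [← hL20]; linarith))
      have hev : ∀ᶠ t in 𝓝[<] T,
          (sigmaBI L / 2 < sigmaBI (x t) ∧ x t 2 < sigmaBI L / 4) ∧ t ∈ Ico 0 T :=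
        (hev1.and hev2).and hevS
      obtain ⟨l, hl, hIoo⟩ := mem_nhdsLT_iff_exists_Ioo_subset.1 hev
      have hmaxlt : max l 0 < T := max_lt hl hT
      set a := (max l 0 + T)/2 with hadef
      have hal : l < a := lt_of_le_of_lt (le_max_left l 0) (by rw [hadef]; linarith)
      have haT : a < T := by rw [hadef]; linarith
      have ha0 : 0 ≤ a := le_trans (le_max_right l 0) (by rw [hadef]; linarith)
      have haS : a ∈ Ico 0 T := ⟨ha0, haT⟩
      have hDS : Ico a T ⊆ Ico 0 T := fun u hu => ⟨le_trans ha0 hu.1, hu.2⟩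
      have hDIoo : Ico a T ⊆ Ioo l T := fun u hu => ⟨lt_of_lt_of_le hal hu.1, hu.2⟩
      have hmono := mono_from_deriv (convex_Ico a T)
        (f := fun s => x s 2)
        (F := fun t => 2*γ*(sigmaBI (x t))^2*(sigmaBI (x t) - 2*(x t 2))/ngBI (x t))
        (fun u hu => (hcd u (hDS hu)).mono hDS)
        (fun u hu => by
          obtain ⟨⟨h1, h2⟩, h3⟩ := hIoo (hDIoo hu)
          apply div_nonneg _ (hNpos u (hDS hu)).le
          have hσu := hσpos u (hDS hu)
          nlinarith [mul_pos hγ (mul_pos (pow_pos hσu 2)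
            (show (0:ℝ) < sigmaBI (x u) - 2*(x u 2) by linarith))])
      have hca : 0 < x a 2 := hcpos a haS
      have hgel : ∀ᶠ t in 𝓝[<] T, x a 2 ≤ x t 2 := by
        have h1 : Ioo a T ∈ 𝓝[<] T := Ioo_mem_nhdsLT_of_mem ⟨haT, le_rfl⟩
        exact Filter.mem_of_superset h1 (fun u hu =>
          hmono ⟨le_rfl, haT⟩ ⟨hu.1.le, hu.2⟩ hu.1.le)
      have := ge_of_tendsto hc2L hgel
      rw [← hL20] at this
      linarith
    · -- σL > 0, L2 > 0 : extension exists, contradiction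
      exfalso
      obtain ⟨ε, hε, hy⟩ := caseB_interior hγ hT hode hoff hLt (ne_of_gt hσLpos) hL2pos
      exact hext ε hε hy

end CaseB


open Filter Topology in
/-- For a maximal continuously differentiable solution of the closed-loop Brockett system
on `[0, t₀)` (with `t₀ ≤ ∞`) with `x₃(0) > 0` and `σ(x(0)) ≠ 0`, staying off the planes
`σ = 0` and `x₃ = 0`, one has `x₃(t) → 0` as `t → t₀` iff `σ(x(t)) → 0` as `t → t₀`;
consequently, if `t₀ < ∞` then `x(t) → 0` as `t → t₀`. -/
theorem brockett_escape_iff (γ : ℝ) (hγ : 0 < γ) (t₀ : EReal) (ht₀ : 0 < t₀)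
    (x : ℝ → EuclideanSpace ℝ (Fin 3))
    (hx30 : 0 < x 0 2) (hσ0 : sigmaBI (x 0) ≠ 0)
    (hode : ∀ t ∈ {s : ℝ | 0 ≤ s ∧ (s : EReal) < t₀},
      HasDerivWithinAt x (brockettRHS γ (x t)) {s : ℝ | 0 ≤ s ∧ (s : EReal) < t₀} t)
    (hoff : ∀ t ∈ {s : ℝ | 0 ≤ s ∧ (s : EReal) < t₀}, sigmaBI (x t) ≠ 0 ∧ x t 2 ≠ 0)
    (hmax : ∀ t₁ : EReal, t₀ < t₁ → ¬ ∃ y : ℝ → EuclideanSpace ℝ (Fin 3),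
      (∀ t : ℝ, 0 ≤ t → (t : EReal) < t₀ → y t = x t) ∧
      ∀ t ∈ {s : ℝ | 0 ≤ s ∧ (s : EReal) < t₁}, sigmaBI (y t) ≠ 0 ∧ y t 2 ≠ 0 ∧
        HasDerivWithinAt y (brockettRHS γ (y t)) {s : ℝ | 0 ≤ s ∧ (s : EReal) < t₁} t) :
    (Tendsto (fun t => x t 2) (Filter.comap (fun t : ℝ => (t : EReal)) (𝓝[<] t₀)) (𝓝 0) ↔
      Tendsto (fun t => sigmaBI (x t))
        (Filter.comap (fun t : ℝ => (t : EReal)) (𝓝[<] t₀)) (𝓝 0)) ∧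
    (t₀ < ⊤ →
      Tendsto x (Filter.comap (fun t : ℝ => (t : EReal)) (𝓝[<] t₀)) (𝓝 0)) := by
  induction t₀ using EReal.rec with
  | bot => exact absurd ht₀ (by simp)
  | coe T =>
    have hT : 0 < T := by exact_mod_cast ht₀
    have hSeq : {s : ℝ | 0 ≤ s ∧ (s : EReal) < (T : EReal)} = Ico 0 T := by
      ext u; simp [EReal.coe_lt_coe_iff]
    rw [hSeq] at hode hoff
    have hext : ∀ ε > 0, ¬ ∃ y : ℝ → EuclideanSpace ℝ (Fin 3),
        (∀ t : ℝ, 0 ≤ t → t < T → y t = x t) ∧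
        ∀ t ∈ Ico 0 (T + ε), sigmaBI (y t) ≠ 0 ∧ y t 2 ≠ 0 ∧
          HasDerivWithinAt y (brockettRHS γ (y t)) (Ico 0 (T + ε)) t := by
      intro ε hε h
      obtain ⟨y, hagree, hcond⟩ := h
      have hSeq2 : {s : ℝ | 0 ≤ s ∧ (s : EReal) < (((T + ε) : ℝ) : EReal)} = Ico 0 (T + ε) := by
        ext u
        simp only [mem_setOf_eq, mem_Ico]
        exact and_congr_right fun _ => EReal.coe_lt_coe_iff
      refine hmax (((T + ε : ℝ)) : EReal) (by exact_mod_cast (by linarith : T < T + ε)) ⟨y, ?_, ?_⟩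
      · exact fun t ht0 htT => hagree t ht0 (by exact_mod_cast htT)
      · rw [hSeq2]
        exact hcond
    have hmain := caseB hγ hT hode hoff hx30 hext
    rw [comap_coe_nhdsWithin_Iio_coe T]
    have hclim : Tendsto (fun t => x t 2) (𝓝[<] T) (𝓝 0) := by
      have h1 := (((EuclideanSpace.proj (2 : Fin 3) (𝕜 := ℝ)).continuous.tendsto 0).comp hmain : _)
      simpa [Function.comp_def] using h1
    have hσlim : Tendsto (fun t => sigmaBI (x t)) (𝓝[<] T) (𝓝 0) := by
      have hσcont : Continuous (fun y : EuclideanSpace ℝ (Fin 3) => sigmaBI y) := by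
        apply Real.continuous_sqrt.comp
        exact (((EuclideanSpace.proj (0 : Fin 3) (𝕜 := ℝ)).continuous.pow 2)).add
          (((EuclideanSpace.proj (1 : Fin 3) (𝕜 := ℝ)).continuous.pow 2))
      have h1 := ((hσcont.tendsto 0).comp hmain : _)
      have h2 : sigmaBI (0 : EuclideanSpace ℝ (Fin 3)) = 0 := by
        simp [sigmaBI]
      rwa [h2] at h1
    exact ⟨⟨fun _ => hσlim, fun _ => hclim⟩, fun _ => hmain⟩
  | top =>
    have hSeq : {s : ℝ | 0 ≤ s ∧ (s : EReal) < (⊤ : EReal)} = Ici 0 := by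
      ext u; simp [EReal.coe_lt_top]
    rw [hSeq] at hode hoff
    rw [comap_coe_nhdsWithin_Iio_top]
    have h0S : (0:ℝ) ∈ Ici (0:ℝ) := self_mem_Ici
    have hcpos : ∀ t ∈ Ici (0:ℝ), 0 < x t 2 :=
      c_pos_on (fun t ht => ht) h0S Set.ordConnected_Ici
        (fun t ht => (comp_deriv (hode t ht) 2).continuousWithinAt)
        (fun t ht => (hoff t ht).2) hx30
    have hσd : ∀ t ∈ Ici (0:ℝ), HasDerivWithinAt (fun s => sigmaBI (x s))
        (2*γ*(x t 2 - sigmaBI (x t))/ngBI (x t)) (Ici 0) t :=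
      fun t ht => sigma_deriv (hode t ht) (hoff t ht).1 (hcpos t ht)
    have hcd : ∀ t ∈ Ici (0:ℝ), HasDerivWithinAt (fun s => x s 2)
        (2*γ*(sigmaBI (x t))^2*(sigmaBI (x t) - 2*(x t 2))/ngBI (x t)) (Ici 0) t :=
      fun t ht => c_deriv (hode t ht) (hoff t ht).1 (hcpos t ht)
    have hσp : ∀ t ∈ Ici (0:ℝ), 0 < sigmaBI (x t) := fun t ht => sigma_pos (hoff t ht).1
    have hNp : ∀ t ∈ Ici (0:ℝ), 0 < ngBI (x t) :=
      fun t ht => ng_pos (hoff t ht).1 (hcpos t ht)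
    have hNsq : ∀ t ∈ Ici (0:ℝ), (ngBI (x t))^2
        = 4*((sigmaBI (x t) - x t 2)^2 + (sigmaBI (x t))^2*(sigmaBI (x t) - 2*(x t 2))^2) :=
      fun t ht => ng_sq (hoff t ht).1 (hcpos t ht)
    refine ⟨⟨fun h => ?_, fun h => ?_⟩, fun h => absurd h (lt_irrefl _)⟩
    · exact caseA_sigma_to_zero hγ hσd hcd hσp hcpos hNp hNsq h
    · exact caseA_c_to_zero hγ hσd hcd hσp hcpos hNp hNsq h
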